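/- Let k' be a field, 𝓖 = ⊕_{r≥1} (t^{a_r}) W^r ⊆ k'[[t]][W] a Rees algebra with a_r ≥ r, and let Δ^r denote the Hasse–Schmidt derivatives on k'[[t]] (from t ↦ t+U). If t^a W^b ∈ 𝓖 with a ≥ b > r ≥ 0, then Δ^r(t^a) W^{b−r} = c · t^{a−r} W^{b−r} for some c ∈ k', and (a−r)/(b−r) ≥ a/b. Consequently λ_{G(𝓖)} = λ_𝓖, where G(𝓖) is the algebra generated by 𝓖 together with all such derivative elements, and hence 𝓖 and G(𝓖) have the same integral closure in k'[[t]][W]. -/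

import Mathlib

set_option synthInstance.maxHeartbeats 400000
set_option maxHeartbeats 1000000

open Polynomial

/-- The Rees algebra of a filtration `I` of ideals of `B`. -/
noncomputable def ReesAlg {B : Type*} [CommRing B] (I : ℕ → Ideal B) : Subalgebra B (Polynomial B) :=
  Algebra.adjoin B {p | ∃ n : ℕ, ∃ g ∈ I n, p = C g * X ^ n}

/-- The `r`-th Hasse–Schmidt derivative on `k'[[t]]` (from `t ↦ t + U`), given on
coefficients by `Δ^r(Σ c_n t^n) = Σ C(n+r, r) c_{n+r} t^n`. -/
noncomputable def psHasseDeriv {k' : Type*} [CommRing k'] (r : ℕ) (f : PowerSeries k') :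
    PowerSeries k' :=
  PowerSeries.mk fun n => (Nat.choose (n + r) r : k') * PowerSeries.coeff (n + r) f

lemma hasse_pow {k' : Type*} [CommRing k'] (A r : ℕ) (h : r ≤ A) :
    psHasseDeriv r ((PowerSeries.X : PowerSeries k') ^ A) =
      (Nat.choose A r : k') • (PowerSeries.X : PowerSeries k') ^ (A - r) := by
  ext n
  simp only [psHasseDeriv, PowerSeries.coeff_mk, PowerSeries.coeff_X_pow,
    PowerSeries.coeff_smul, smul_eq_mul]
  by_cases h1 : n + r = A
  · rw [if_pos h1, if_pos (by omega), mul_one, mul_one, h1]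
  · rw [if_neg h1, if_neg (by omega), mul_zero, mul_zero]

lemma isIntegral_of_le {R B : Type*} [CommRing R] [CommRing B] [Algebra R B]
    {S T : Subalgebra R B} (h : S ≤ T) {x : B} (hx : IsIntegral S x) : IsIntegral T x := by
  obtain ⟨q, hq, he⟩ := hx
  refine ⟨q.map (Subalgebra.inclusion h).toRingHom, hq.map _, ?_⟩
  rw [← he, eval₂_map]
  congr 1

lemma isIntegral_of_pow_mem {R B : Type*} [CommRing R] [CommRing B] [Nontrivial B] [Algebra R B]
    (S : Subalgebra R B) {x : B} {n : ℕ} (hn : 0 < n) (hx : x ^ n ∈ S) : IsIntegral S x := by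
  haveI : Nontrivial S := ⟨⟨0, 1, fun hh => zero_ne_one (congrArg Subtype.val hh)⟩⟩
  refine ⟨X ^ n - C ⟨x ^ n, hx⟩, monic_X_pow_sub_C _ hn.ne', ?_⟩
  simp [sub_eq_zero]


/-- For `𝓖 = ⊕_{r≥1} (t^{a_r}) W^r ⊆ k'[[t]][W]` with `a_r ≥ r`: the Hasse derivatives
satisfy `Δ^r(t^A) = C(A,r) t^{A-r}`; the slope inequality `(A-r)/(b-r) ≥ A/b` holds for
`A ≥ b > r`; and `𝓖` and the Diff-algebra `G(𝓖)` generated by all elements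
`Δ^r(t^{a_m}) W^{m-r}` have the same integral closure in `k'[[t]][W]`. -/
theorem stmt_11 (k' : Type*) [Field k'] (a : ℕ → ℕ)
    (ha : ∀ r, 1 ≤ r → r ≤ a r)
    (hsub : ∀ k s, 1 ≤ k → 1 ≤ s → a (k + s) ≤ a k + a s)
    (I : ℕ → Ideal (PowerSeries k'))
    (hI0 : I 0 = ⊤)
    (hIr : ∀ r, 1 ≤ r → I r = Ideal.span {(PowerSeries.X : PowerSeries k') ^ a r})
    (GG : Subalgebra (PowerSeries k') (Polynomial (PowerSeries k')))
    (hGG : GG = Algebra.adjoin (PowerSeries k')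
      {p | ∃ m r : ℕ, 1 ≤ m ∧ r < m ∧
        p = C (psHasseDeriv r ((PowerSeries.X : PowerSeries k') ^ a m)) * X ^ (m - r)}) :
    (∀ A r : ℕ, r ≤ A →
      psHasseDeriv r ((PowerSeries.X : PowerSeries k') ^ A) =
        (Nat.choose A r : k') • (PowerSeries.X : PowerSeries k') ^ (A - r)) ∧
    (∀ A b r : ℕ, b ≤ A → r < b → (A : ℚ) / (b : ℚ) ≤ ((A - r : ℕ) : ℚ) / ((b - r : ℕ) : ℚ)) ∧
    (∀ p : Polynomial (PowerSeries k'), IsIntegral (ReesAlg I) p ↔ IsIntegral GG p) := by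
  refine ⟨fun A r h => hasse_pow A r h, ?_, ?_⟩
  · intro A b r hbA hrb
    have h1 : ((A - r : ℕ) : ℚ) = (A : ℚ) - r := by
      push_cast [Nat.cast_sub (by omega : r ≤ A)]; ring
    have h2 : ((b - r : ℕ) : ℚ) = (b : ℚ) - r := by
      push_cast [Nat.cast_sub (by omega : r ≤ b)]; ring
    have hb0 : (0:ℚ) < b := by exact_mod_cast (show 0 < b by omega)
    have hbr0 : (0:ℚ) < (b:ℚ) - r := by
      have : (r : ℚ) < b := by exact_mod_cast hrb
      linarith
    rw [h1, h2, div_le_div_iff₀ hb0 hbr0]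
    have hA : (b : ℚ) ≤ A := by exact_mod_cast hbA
    have hr : (r : ℚ) < b := by exact_mod_cast hrb
    have hr0 : (0 : ℚ) ≤ r := by positivity
    nlinarith
  · -- subadditivity: a (q * s) ≤ q * a s
    have hmul : ∀ q s : ℕ, 1 ≤ s → 1 ≤ q → a (q * s) ≤ q * a s := by
      intro q s hs
      induction q with
      | zero => omega
      | succ n ih =>
        intro _
        rcases Nat.eq_zero_or_pos n with rfl | hn
        · simp
        · have h1 := hsub (n * s) s (Nat.mul_pos hn hs) hs
          have h2 := ih hn
          calc a ((n + 1) * s) = a (n * s + s) := by ring_nf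
            _ ≤ a (n * s) + a s := h1
            _ ≤ n * a s + a s := by omega
            _ = (n + 1) * a s := by ring
    -- ReesAlg I ≤ GG
    have hle : ReesAlg I ≤ GG := by
      apply Algebra.adjoin_le
      rintro p ⟨n, g, hg, rfl⟩
      rcases Nat.eq_zero_or_pos n with rfl | hn
      · simpa using Subalgebra.algebraMap_mem GG g
      · rw [hIr n hn] at hg
        obtain ⟨h, rfl⟩ := Ideal.mem_span_singleton.mp hg
        have key : C ((PowerSeries.X : PowerSeries k') ^ a n) * X ^ n ∈ GG := by
          rw [hGG]
          apply Algebra.subset_adjoin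
          refine ⟨n, 0, hn, hn, ?_⟩
          rw [hasse_pow _ 0 (Nat.zero_le _)]
          simp
        have : C ((PowerSeries.X : PowerSeries k') ^ a n * h) * X ^ n =
            C h * (C ((PowerSeries.X : PowerSeries k') ^ a n) * X ^ n) := by
          rw [map_mul]; ring
        rw [this]
        exact mul_mem (Subalgebra.algebraMap_mem GG h) key
    -- generators of GG are integral over ReesAlg I
    have hgen : ∀ x ∈ {p : Polynomial (PowerSeries k') | ∃ m r : ℕ, 1 ≤ m ∧ r < m ∧
        p = C (psHasseDeriv r ((PowerSeries.X : PowerSeries k') ^ a m)) * X ^ (m - r)},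
        IsIntegral (ReesAlg I) x := by
      rintro p ⟨m, r, hm, hrm, rfl⟩
      have hma : m ≤ a m := ha m hm
      rw [hasse_pow _ r (by omega)]
      apply isIntegral_of_pow_mem _ (show 0 < m by omega)
      have hexp : ((Nat.choose (a m) r : k') • (PowerSeries.X : PowerSeries k') ^ (a m - r)) ^ m
          = PowerSeries.C ((Nat.choose (a m) r : k') ^ m) *
            (PowerSeries.X : PowerSeries k') ^ ((a m - r) * m) := by
        rw [_root_.smul_pow, ← pow_mul, PowerSeries.smul_eq_C_mul]
      rw [mul_pow, ← map_pow, ← pow_mul, hexp, map_mul]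
      have hmem : C ((PowerSeries.X : PowerSeries k') ^ ((a m - r) * m)) * X ^ ((m - r) * m)
          ∈ ReesAlg I := by
        apply Algebra.subset_adjoin
        refine ⟨(m - r) * m, (PowerSeries.X : PowerSeries k') ^ ((a m - r) * m), ?_, rfl⟩
        rw [hIr ((m - r) * m) (Nat.mul_pos (by omega) (by omega))]
        apply Ideal.mem_span_singleton.mpr
        apply pow_dvd_pow
        calc a ((m - r) * m) ≤ (m - r) * a m := hmul (m - r) m (by omega) (by omega)
          _ ≤ (a m - r) * m := by
              zify [show r ≤ m by omega, show r ≤ a m by omega]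
              nlinarith [show (r : ℤ) * m ≤ r * a m by
                exact mul_le_mul_of_nonneg_left (by exact_mod_cast hma) (by positivity)]
        done
      rw [mul_assoc]
      exact mul_mem (Subalgebra.algebraMap_mem (ReesAlg I)
        (PowerSeries.C ((Nat.choose (a m) r : k') ^ m))) hmem
    -- all of GG is integral over ReesAlg I
    have hGGint : ∀ x ∈ GG, IsIntegral (ReesAlg I) x := by
      have hsub' : GG ≤ (integralClosure (ReesAlg I)
          (Polynomial (PowerSeries k'))).restrictScalars (PowerSeries k') := by
        rw [hGG]
        apply Algebra.adjoin_le
        intro x hx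
        exact (Subalgebra.mem_restrictScalars _).mpr (hgen x hx)
      intro x hx
      exact (Subalgebra.mem_restrictScalars _).mp (hsub' hx)
    intro p
    constructor
    · exact fun hx => isIntegral_of_le hle hx
    · intro hx
      letI : Algebra (ReesAlg I) GG := (Subalgebra.inclusion hle).toRingHom.toAlgebra
      haveI : IsScalarTower (ReesAlg I) GG (Polynomial (PowerSeries k')) := by
        constructor
        intro x y z
        simp only [Subalgebra.smul_def]
        rw [show ((x • y : GG) : Polynomial (PowerSeries k')) =
            (x : Polynomial (PowerSeries k')) * (y : Polynomial (PowerSeries k')) by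
          rw [Algebra.smul_def, MulMemClass.coe_mul]; rfl]
        rw [smul_eq_mul, smul_eq_mul, smul_eq_mul, mul_assoc]
      have h2 : Function.Injective (algebraMap GG (Polynomial (PowerSeries k'))) := by
        intro u v huv
        apply Subtype.ext
        rw [Subalgebra.algebraMap_eq] at huv
        simpa using huv
      haveI : Algebra.IsIntegral (ReesAlg I) GG :=
        ⟨fun t => IsIntegral.tower_bot (x := t) h2 (hGGint t.1 t.2)⟩
      exact isIntegral_trans p hx
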